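/- The group homomorphism φ : H → H determined by φ(a) = a², φ(b) = b, φ(s) = s⁻¹bs² is injective. -/

import Mathlib

/-- Generators `a`, `b`, `s` of the presented group `H`. -/
inductive Gen3 : Type
  | a | b | s

open FreeGroup in
/-- The relators `b⁻¹ * a * b * a⁻¹` and `s⁻¹ * a² * s * a⁻⁴`. -/
def relsH : Set (FreeGroup Gen3) :=
  {(of Gen3.b)⁻¹ * of Gen3.a * of Gen3.b * (of Gen3.a)⁻¹,
   (of Gen3.s)⁻¹ * (of Gen3.a) ^ 2 * of Gen3.s * ((of Gen3.a) ^ 4)⁻¹}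

/-- The group `H = ⟨a, b, s ∣ b⁻¹ab = a, s⁻¹a²s = a⁴⟩`. -/
abbrev H : Type := PresentedGroup relsH

/-- The images of the generators `a`, `b`, `s` in `H`. -/
def ha : H := PresentedGroup.of Gen3.a
def hb : H := PresentedGroup.of Gen3.b
def hs : H := PresentedGroup.of Gen3.s

open HNNExtension HNNExtension.NormalWord Multiplicative Subgroup

abbrev G0 : Type := Multiplicative (ℤ × ℤ)

def dbl : G0 →* G0 :=
  MonoidHom.mk' (fun x => ofAdd (2 * x.toAdd.1, x.toAdd.2)) (by
    intro x y
    apply Multiplicative.toAdd.injective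
    simp [Prod.ext_iff]
    ring)

lemma dbl_inj : Function.Injective dbl := by
  intro x y h
  apply Multiplicative.toAdd.injective
  have h1 := congrArg (fun z => (Multiplicative.toAdd z).1) h
  have h2 := congrArg (fun z => (Multiplicative.toAdd z).2) h
  simp [dbl] at h1 h2
  exact Prod.ext h1 h2

def SA : Subgroup G0 := zpowers (ofAdd ((2,0) : ℤ × ℤ))
def SB : Subgroup G0 := zpowers (ofAdd ((4,0) : ℤ × ℤ))

lemma mapA : SA.map dbl = SB := by
  rw [SA, MonoidHom.map_zpowers]
  congr 1

noncomputable def ee : SA ≃* SB :=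
  (SA.equivMapOfInjective dbl dbl_inj).trans (MulEquiv.subgroupCongr mapA)

lemma he (x : SA) : (ee x : G0) = dbl x := rfl

lemma mem_SA_iff (x : G0) : x ∈ SA ↔ ∃ k : ℤ, x = ofAdd (2*k, 0) := by
  constructor
  · rintro ⟨k, rfl⟩
    exact ⟨k, by apply Multiplicative.toAdd.injective; simp [Prod.ext_iff]; ring⟩
  · rintro ⟨k, rfl⟩
    exact ⟨k, by apply Multiplicative.toAdd.injective; simp [Prod.ext_iff]; ring⟩

lemma mem_SB_iff (x : G0) : x ∈ SB ↔ ∃ k : ℤ, x = ofAdd (4*k, 0) := by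
  constructor
  · rintro ⟨k, rfl⟩
    exact ⟨k, by apply Multiplicative.toAdd.injective; simp [Prod.ext_iff]; ring⟩
  · rintro ⟨k, rfl⟩
    exact ⟨k, by apply Multiplicative.toAdd.injective; simp [Prod.ext_iff]; ring⟩

def a0 : G0 := ofAdd (1,0)
def b0 : G0 := ofAdd (0,1)

lemma b0_not_SA : b0 ∉ SA := by
  rw [mem_SA_iff]
  rintro ⟨k, hk⟩
  have := congrArg (fun z => (Multiplicative.toAdd z).2) hk
  simp [b0] at this

lemma b0_inv_not_SA : b0⁻¹ ∉ SA := by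
  rw [mem_SA_iff]
  rintro ⟨k, hk⟩
  have := congrArg (fun z => (Multiplicative.toAdd z).2) hk
  simp [b0] at this

lemma dbl_mem_SB_iff (g : G0) : dbl g ∈ SB ↔ g ∈ SA := by
  rw [mem_SA_iff, mem_SB_iff]
  constructor
  · rintro ⟨k, hk⟩
    refine ⟨k, ?_⟩
    have h1 := congrArg (fun z => (Multiplicative.toAdd z).1) hk
    have h2 := congrArg (fun z => (Multiplicative.toAdd z).2) hk
    simp [dbl] at h1 h2
    apply Multiplicative.toAdd.injective
    refine Prod.ext ?_ h2
    simpa using by omega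
  · rintro ⟨k, rfl⟩
    exact ⟨k, by apply Multiplicative.toAdd.injective; simp [dbl, Prod.ext_iff]; ring⟩

lemma b0_inv_mul_not_SA {g : G0} (hg : g ∈ SA) : b0⁻¹ * g ∉ SA := by
  rw [mem_SA_iff] at *
  obtain ⟨k, rfl⟩ := hg
  rintro ⟨m, hm⟩
  have := congrArg (fun z => (Multiplicative.toAdd z).2) hm
  simp [b0] at this

lemma mul_b0_not_SB {g : G0} (hg : g ∈ SA) : g * b0 ∉ SB := by
  rw [mem_SA_iff] at hg
  rw [mem_SB_iff]
  obtain ⟨k, rfl⟩ := hg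
  rintro ⟨m, hm⟩
  have := congrArg (fun z => (Multiplicative.toAdd z).2) hm
  simp [b0] at this

noncomputable abbrev E : Type := HNNExtension G0 SA SB ee

lemma conj_dbl {g : G0} (hg : g ∈ SA) :
    t⁻¹ * HNNExtension.of (dbl g) * t = (HNNExtension.of g : E) := by
  have h1 : (⟨dbl g, (dbl_mem_SB_iff g).2 hg⟩ : SB) = ee ⟨g, hg⟩ := by
    apply Subtype.ext
    simp [he]
  have h2 := equiv_symm_eq_conj (φ := ee) (⟨dbl g, (dbl_mem_SB_iff g).2 hg⟩ : SB)
  rw [h1, MulEquiv.symm_apply_apply] at h2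
  exact h2.symm

noncomputable def wprod (L : List (ℤˣ × G0)) : E :=
  (L.map fun x => (t : E) ^ (x.1 : ℤ) * HNNExtension.of x.2).prod

lemma wprod_nil : wprod [] = 1 := rfl

lemma wprod_cons (p : ℤˣ × G0) (L : List (ℤˣ × G0)) :
    wprod (p :: L) = (t : E) ^ (p.1 : ℤ) * HNNExtension.of p.2 * wprod L := by
  simp [wprod]

abbrev Cond : (ℤˣ × G0) → (ℤˣ × G0) → Prop :=
  fun p q => p.2 ∈ toSubgroup SA SB p.1 → p.1 = q.1

example (g : G0) : Cond (1, g) (1, g) := fun _ => rfl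

lemma key (Ψ : E →* E) (h1 : ∀ g : G0, Ψ (HNNExtension.of g) = HNNExtension.of (dbl g))
    (h2 : Ψ t = t * t * (HNNExtension.of b0)⁻¹ * t⁻¹) :
    ∀ L : List (ℤˣ × G0), L.Chain' Cond →
    ∃ L' : List (ℤˣ × G0), L'.Chain' Cond ∧ Ψ (wprod L) = wprod L' ∧
      L'.head? = L.head?.map (fun p => ((1:ℤˣ), if p.1 = 1 then (1:G0) else b0)) := by
  intro L
  induction L with
  | nil => exact fun _ => ⟨[], List.isChain_nil, by simp [wprod_nil], rfl⟩
  | cons p M ih =>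
    obtain ⟨u, g⟩ := p
    intro hchain
    obtain ⟨LM, hLMchain, hLMprod, hLMhead⟩ := ih (List.isChain_cons.1 hchain).2
    have hadj := (List.isChain_cons.1 hchain).1
    have hΨ : Ψ (wprod ((u,g)::M)) = Ψ t ^ (u:ℤ) * HNNExtension.of (dbl g) * wprod LM := by
      rw [wprod_cons, map_mul, map_mul, map_zpow, h1, hLMprod]
    by_cases hp : g ∈ SA ∧ M ≠ []
    · -- pinch case
      obtain ⟨hgA, hM⟩ := hp
      obtain ⟨⟨u', g'⟩, M'', rfl⟩ := List.exists_cons_of_ne_nil hM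
      have hLMhead' : LM.head? = some ((1:ℤˣ), if u' = 1 then (1:G0) else b0) := by
        simpa using hLMhead
      obtain ⟨q, rest, rfl⟩ : ∃ q rest, LM = q :: rest := by
        cases LM with
        | nil => simp at hLMhead'
        | cons q rest => exact ⟨q, rest, rfl⟩
      have hq : q = ((1:ℤˣ), if u' = 1 then (1:G0) else b0) := by simpa using hLMhead'
      subst hq
      have hrest : rest.Chain' Cond := (List.isChain_cons.1 hLMchain).2
      rcases Int.units_eq_one_or u with rfl | rfl
      · -- u = 1 : then u' = 1 and c = 1
        have hu' : (1:ℤˣ) = u' := hadj (u', g') rfl (by simpa using hgA)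
        subst hu'
        refine ⟨((1:ℤˣ),(1:G0)) :: ((1:ℤˣ), b0⁻¹ * g) :: rest, ?_, ?_, by simp⟩
        · refine List.isChain_cons_cons.2 ⟨fun _ => rfl, List.isChain_cons.2 ⟨?_, hrest⟩⟩
          intro q hqm hmem
          exact absurd (by simpa using hmem) (b0_inv_mul_not_SA hgA)
        · rw [hΨ, h2]
          simp only [wprod_cons, Units.val_one, zpow_one, if_pos rfl, if_true,
            eq_self_iff_true, map_one, mul_one, map_mul, map_inv]
          rw [← conj_dbl hgA]
          group
      · -- u = -1
        refine ⟨((1:ℤˣ), b0) :: ((-1:ℤˣ), g * (if u' = 1 then (1:G0) else b0)) :: rest,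
          ?_, ?_, by simp⟩
        · refine List.isChain_cons_cons.2 ⟨?_, List.isChain_cons.2 ⟨?_, hrest⟩⟩
          · intro hmem
            exact absurd (by simpa using hmem) b0_not_SA
          · intro q hqm hmem
            rcases Int.units_eq_one_or u' with rfl | rfl
            · have hg' : g ∉ SB := by
                intro hgB
                have h3 : (-1:ℤˣ) = 1 := hadj (1, g') rfl (by simpa using hgB)
                exact absurd h3 (by decide)
              simp only [if_pos rfl, mul_one] at hmem
              exact absurd (by simpa using hmem) hg'
            · have : (-1:ℤˣ) ≠ 1 := by decide
              simp only [if_neg this] at hmem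
              exact absurd (by simpa using hmem) (mul_b0_not_SB hgA)
        · rw [hΨ]
          simp only [wprod_cons, Units.val_neg, Units.val_one, zpow_neg, zpow_one, map_mul,
            map_inv]
          rw [h2, ← conj_dbl hgA]
          group
    · -- no pinch
      have hnp : ∀ q ∈ LM.head?, dbl g ∈ SB → (-1 : ℤˣ) = q.1 := by
        intro q hqm hmem
        rcases not_and_or.1 hp with hgA | hM
        · exact absurd ((dbl_mem_SB_iff g).1 hmem) hgA
        · rw [not_ne_iff.1 hM] at hLMhead
          simp at hLMhead
          rw [hLMhead] at hqm
          simp at hqm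
      rcases Int.units_eq_one_or u with rfl | rfl
      · refine ⟨((1:ℤˣ),(1:G0)) :: ((1:ℤˣ), b0⁻¹) :: ((-1:ℤˣ), dbl g) :: LM, ?_, ?_, by simp⟩
        · refine List.isChain_cons_cons.2 ⟨fun _ => rfl, List.isChain_cons_cons.2 ⟨?_, List.isChain_cons.2 ⟨?_, hLMchain⟩⟩⟩
          · intro hmem
            exact absurd (by simpa using hmem) b0_inv_not_SA
          · intro q hqm hmem
            exact hnp q hqm (by simpa using hmem)
        · rw [hΨ, h2]
          simp only [wprod_cons, Units.val_one, Units.val_neg, zpow_one, zpow_neg, map_one,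
            mul_one, map_mul, map_inv]
          group
      · refine ⟨((1:ℤˣ), b0) :: ((-1:ℤˣ), (1:G0)) :: ((-1:ℤˣ), dbl g) :: LM, ?_, ?_, by simp⟩
        · refine List.isChain_cons_cons.2 ⟨?_, List.isChain_cons_cons.2 ⟨fun _ => rfl, List.isChain_cons.2 ⟨?_, hLMchain⟩⟩⟩
          · intro hmem
            exact absurd (by simpa using hmem) b0_not_SA
          · intro q hqm hmem
            exact hnp q hqm (by simpa using hmem)
        · rw [hΨ, h2]
          simp only [wprod_cons, Units.val_one, Units.val_neg, zpow_one, zpow_neg, map_one,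
            mul_one, map_mul, map_inv]
          group

lemma psi_inj (Ψ : E →* E) (h1 : ∀ g : G0, Ψ (HNNExtension.of g) = HNNExtension.of (dbl g))
    (h2 : Ψ t = t * t * (HNNExtension.of b0)⁻¹ * t⁻¹) : Function.Injective Ψ := by
  rw [injective_iff_map_eq_one]
  intro x hx
  obtain ⟨d⟩ := TransversalPair.nonempty G0 SA SB
  have hw : ((NormalWord.equiv ee d) x).prod ee = x :=
    (NormalWord.equiv ee d).symm_apply_apply x
  set w : ReducedWord G0 SA SB := ((NormalWord.equiv ee d) x).toReducedWord with hwdef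
  obtain ⟨L', hch, hprod, hhead⟩ := key Ψ h1 h2 w.toList w.chain
  have hsplit : w.prod ee = HNNExtension.of w.head * wprod w.toList := rfl
  have h4 : (1 : E) = HNNExtension.of (dbl w.head) * wprod L' := by
    rw [← hx, ← hw]
    show Ψ (w.prod ee) = _
    rw [hsplit, map_mul, h1, hprod]
  have hB : L' = [] := by
    refine ReducedWord.toList_eq_nil_of_mem_of_range ee ⟨dbl w.head, L', hch⟩ ?_
    show HNNExtension.of (dbl w.head) * wprod L' ∈ _
    rw [← h4]
    exact ⟨1, by simp⟩
  have hnil : w.toList = [] := by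
    rw [hB] at hhead
    simp only [List.head?_nil] at hhead
    cases hL : w.toList with
    | nil => rfl
    | cons p M => rw [hL] at hhead; simp at hhead
  have hdh : dbl w.head = 1 := by
    apply HNNExtension.of_injective (φ := ee)
    rw [hB, wprod_nil, mul_one] at h4
    rw [← h4, map_one]
  have hh : w.head = 1 := dbl_inj (by rw [hdh, map_one])
  rw [← hw, hsplit, hnil, hh, wprod_nil, map_one, one_mul]

-- relators in H
lemma relH1 : hb⁻¹ * ha * hb * ha⁻¹ = 1 := by
  have hmem : ((FreeGroup.of Gen3.b)⁻¹ * FreeGroup.of Gen3.a * FreeGroup.of Gen3.b *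
      (FreeGroup.of Gen3.a)⁻¹) ∈ relsH := Set.mem_insert _ _
  have h0 : PresentedGroup.mk relsH ((FreeGroup.of Gen3.b)⁻¹ * FreeGroup.of Gen3.a *
      FreeGroup.of Gen3.b * (FreeGroup.of Gen3.a)⁻¹) = 1 :=
    (QuotientGroup.eq_one_iff _).2 (Subgroup.subset_normalClosure hmem)
  simp only [map_mul, map_inv] at h0; exact h0

lemma relH2 : hs⁻¹ * ha ^ 2 * hs * (ha ^ 4)⁻¹ = 1 := by
  have hmem : ((FreeGroup.of Gen3.s)⁻¹ * (FreeGroup.of Gen3.a) ^ 2 * FreeGroup.of Gen3.s *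
      ((FreeGroup.of Gen3.a) ^ 4)⁻¹) ∈ relsH := by
    right; rfl
  have h0 : PresentedGroup.mk relsH ((FreeGroup.of Gen3.s)⁻¹ * (FreeGroup.of Gen3.a) ^ 2 *
      FreeGroup.of Gen3.s * ((FreeGroup.of Gen3.a) ^ 4)⁻¹) = 1 :=
    (QuotientGroup.eq_one_iff _).2 (Subgroup.subset_normalClosure hmem)
  simp only [map_mul, map_inv, map_pow] at h0; exact h0

lemma hcomm : Commute ha hb := by
  have hr := relH1
  have h' : hb⁻¹ * ha * hb = ha := by rwa [mul_inv_eq_one] at hr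
  have h2 : ha * hb = hb * (hb⁻¹ * ha * hb) := by group
  rw [h'] at h2
  exact h2

lemma hconj : hs⁻¹ * ha ^ 2 * hs = ha ^ 4 := by
  have hr := relH2
  rwa [mul_inv_eq_one] at hr

lemma hs_semiconj : ∀ k : ℤ, hs⁻¹ * ha ^ (2*k) = ha ^ (4*k) * hs⁻¹ := by
  have sc : SemiconjBy hs⁻¹ (ha ^ (2:ℤ)) (ha ^ (4:ℤ)) := by
    show hs⁻¹ * ha ^ (2:ℤ) = ha ^ (4:ℤ) * hs⁻¹
    have : hs⁻¹ * ha ^ (2:ℕ) = ha ^ (4:ℕ) * hs⁻¹ := by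
      rw [← hconj]; group
    simpa [zpow_ofNat] using this
  intro k
  have h2 : hs⁻¹ * (ha ^ (2:ℤ)) ^ k = (ha ^ (4:ℤ)) ^ k * hs⁻¹ := sc.zpow_right k
  rw [← zpow_mul, ← zpow_mul] at h2
  exact h2

-- the map H →* E
noncomputable def fgen : Gen3 → E := fun x => match x with
  | Gen3.a => HNNExtension.of a0
  | Gen3.b => HNNExtension.of b0
  | Gen3.s => t⁻¹

lemma a0sq : a0 ^ (2:ℕ) = ofAdd ((2,0) : ℤ × ℤ) := by decide
lemma a0fourth : a0 ^ (4:ℕ) = ofAdd ((4,0) : ℤ × ℤ) := by decide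

lemma conj_two : t * HNNExtension.of (ofAdd ((2,0) : ℤ × ℤ)) * t⁻¹ =
    (HNNExtension.of (ofAdd ((4,0) : ℤ × ℤ)) : E) := by
  have hmem : (ofAdd ((2,0):ℤ×ℤ)) ∈ SA := Subgroup.mem_zpowers _
  have h := equiv_eq_conj (φ := ee) ⟨ofAdd ((2,0):ℤ×ℤ), hmem⟩
  rw [← h]
  congr 1

lemma fgen_rels : ∀ r ∈ relsH, FreeGroup.lift fgen r = 1 := by
  intro r hr
  simp only [relsH, Set.mem_insert_iff, Set.mem_singleton_iff] at hr
  rcases hr with rfl | rfl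
  · simp only [map_mul, map_inv, FreeGroup.lift_apply_of, fgen]
    have hg : b0⁻¹ * a0 * b0 * a0⁻¹ = (1 : G0) := by decide
    simp only [← map_inv, ← map_mul]
    rw [hg, map_one]
  · simp only [map_mul, map_inv, map_pow, FreeGroup.lift_apply_of, fgen, inv_inv]
    rw [← map_pow, ← map_pow, a0sq, a0fourth]
    rw [conj_two]
    simp

noncomputable def alphaH : H →* E := PresentedGroup.toGroup fgen_rels

lemma alphaH_a : alphaH ha = HNNExtension.of a0 := PresentedGroup.toGroup.of _
lemma alphaH_b : alphaH hb = HNNExtension.of b0 := PresentedGroup.toGroup.of _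
lemma alphaH_s : alphaH hs = t⁻¹ := PresentedGroup.toGroup.of _

-- the map E →* H
def fbase : G0 →* H :=
  MonoidHom.mk' (fun x => ha ^ (Multiplicative.toAdd x).1 * hb ^ (Multiplicative.toAdd x).2)
    (by
      intro x y
      have hc : hb ^ (Multiplicative.toAdd x).2 * ha ^ (Multiplicative.toAdd y).1
          = ha ^ (Multiplicative.toAdd y).1 * hb ^ (Multiplicative.toAdd x).2 :=
        (hcomm.symm.zpow_zpow _ _).eq
      simp only [toAdd_mul, Prod.fst_add, Prod.snd_add, zpow_add]
      calc ha ^ (Multiplicative.toAdd x).1 * ha ^ (Multiplicative.toAdd y).1 *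
            (hb ^ (Multiplicative.toAdd x).2 * hb ^ (Multiplicative.toAdd y).2)
          = ha ^ (Multiplicative.toAdd x).1 * (hb ^ (Multiplicative.toAdd x).2 *
              ha ^ (Multiplicative.toAdd y).1) * hb ^ (Multiplicative.toAdd y).2 := by
            rw [hc]; group
        _ = ha ^ (Multiplicative.toAdd x).1 * hb ^ (Multiplicative.toAdd x).2 *
            (ha ^ (Multiplicative.toAdd y).1 * hb ^ (Multiplicative.toAdd y).2) := by
            group)

lemma fbase_cond : ∀ aa : SA, hs⁻¹ * fbase (aa : G0) = fbase ((ee aa : SB) : G0) * hs⁻¹ := by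
  intro aa
  obtain ⟨k, hk⟩ := (mem_SA_iff _).1 aa.2
  have h2 : ((ee aa : SB) : G0) = dbl (aa : G0) := he aa
  rw [h2, hk]
  show hs⁻¹ * (ha ^ (2*k) * hb ^ (0:ℤ)) = ha ^ (2*(2*k)) * hb ^ (0:ℤ) * hs⁻¹
  rw [zpow_zero, mul_one, mul_one]
  have : 2*(2*k) = 4*k := by ring
  rw [this]
  exact hs_semiconj k

noncomputable def betaH : E →* H := HNNExtension.lift fbase hs⁻¹ fbase_cond

lemma betaH_of (g : G0) : betaH (HNNExtension.of g) = fbase g := HNNExtension.lift_of _ _ _ _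
lemma betaH_t : betaH t = hs⁻¹ := HNNExtension.lift_t _ _ _

lemma beta_alpha : ∀ y : H, betaH (alphaH y) = y := by
  have h : betaH.comp alphaH = MonoidHom.id H := by
    apply PresentedGroup.ext
    intro x
    cases x
    · show betaH (alphaH ha) = ha
      rw [alphaH_a, betaH_of]
      show ha ^ (1:ℤ) * hb ^ (0:ℤ) = ha
      simp
    · show betaH (alphaH hb) = hb
      rw [alphaH_b, betaH_of]
      show ha ^ (0:ℤ) * hb ^ (1:ℤ) = hb
      simp
    · show betaH (alphaH hs) = hs
      rw [alphaH_s, map_inv, betaH_t, inv_inv]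
  intro y
  exact DFunLike.congr_fun h y

lemma gen_split (x : G0) :
    a0 ^ (Multiplicative.toAdd x).1 * b0 ^ (Multiplicative.toAdd x).2 = x := by
  apply Multiplicative.toAdd.injective
  rw [toAdd_mul, toAdd_zpow, toAdd_zpow]
  show (Multiplicative.toAdd x).1 • ((1,0) : ℤ × ℤ) + (Multiplicative.toAdd x).2 • ((0,1) : ℤ × ℤ)
      = Multiplicative.toAdd x
  apply Prod.ext <;> simp

lemma alpha_beta : ∀ y : E, alphaH (betaH y) = y := by
  have h : alphaH.comp betaH = MonoidHom.id E := by
    apply HNNExtension.hom_ext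
    · apply MonoidHom.ext
      intro x
      show alphaH (betaH (HNNExtension.of x)) = HNNExtension.of x
      rw [betaH_of]
      show alphaH (ha ^ (Multiplicative.toAdd x).1 * hb ^ (Multiplicative.toAdd x).2) = _
      rw [map_mul, map_zpow, map_zpow, alphaH_a, alphaH_b, ← map_zpow, ← map_zpow, ← map_mul,
        gen_split]
    · show alphaH (betaH t) = t
      rw [betaH_t, map_inv, alphaH_s, inv_inv]
  intro y
  exact DFunLike.congr_fun h y

/-- The endomorphism `φ` of `H` determined by `φ(a) = a²`, `φ(b) = b`,
`φ(s) = s⁻¹bs²` is injective. -/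
theorem phi_injective (φ : H →* H)
    (hφa : φ ha = ha ^ 2) (hφb : φ hb = hb) (hφs : φ hs = hs⁻¹ * hb * hs ^ 2) :
    Function.Injective φ := by
  set Ψ : E →* E := alphaH.comp (φ.comp betaH) with hΨdef
  have hΨ1 : ∀ g : G0, Ψ (HNNExtension.of g) = HNNExtension.of (dbl g) := by
    intro g
    show alphaH (φ (betaH (HNNExtension.of g))) = _
    rw [betaH_of]
    show alphaH (φ (ha ^ (Multiplicative.toAdd g).1 * hb ^ (Multiplicative.toAdd g).2)) = _
    rw [map_mul, map_zpow, map_zpow, hφa, hφb]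
    rw [map_mul, map_zpow, map_zpow, map_pow, alphaH_a, alphaH_b]
    have h2 : ((HNNExtension.of a0 : E) ^ (2:ℕ)) ^ (Multiplicative.toAdd g).1
        = (HNNExtension.of a0 : E) ^ (2 * (Multiplicative.toAdd g).1) := by
      rw [← zpow_natCast (HNNExtension.of a0 : E) 2, ← zpow_mul]
      norm_num
    rw [h2, ← gen_split (dbl g), map_mul, map_zpow, map_zpow]
    rfl
  have hΨ2 : Ψ t = t * t * (HNNExtension.of b0)⁻¹ * t⁻¹ := by
    show alphaH (φ (betaH t)) = _
    rw [betaH_t, map_inv, hφs]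
    rw [map_inv, map_mul, map_mul, map_inv, map_pow, alphaH_s, alphaH_b]
    group
    simp [zpow_two, pow_two, mul_assoc]
  intro x y hxy
  have h1 : Ψ (alphaH x) = Ψ (alphaH y) := by
    show alphaH (φ (betaH (alphaH x))) = alphaH (φ (betaH (alphaH y)))
    rw [beta_alpha, beta_alpha, hxy]
  have h2 := psi_inj Ψ hΨ1 hΨ2 h1
  have h3 := congrArg betaH h2
  rwa [beta_alpha, beta_alpha] at h3
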